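/- Let p be an odd prime and n ≥ 2 with p > 2(n+3)²n⁴. Suppose y is a nonzero residue mod p with y ≢ ±1 (mod p), and suppose there are integers r₁,s₁,r₂,s₂,r₃,s₃ with 1 ≤ sᵢ ≤ n, |rᵢ| < (n+3)sᵢ, rᵢ ≠ 0, such that y ≡ r₂·s₂⁻¹·s₁·r₁⁻¹ (mod p) and y ≡ r₁·s₁⁻¹·s₃·r₃⁻¹ (mod p). Then (r₁/s₁)² = (r₂/s₂)·(r₃/s₃) as rational numbers. -/
import Mathlib


theorem stmt_14 (p n y r₁ s₁ r₂ s₂ r₃ s₃ : ℤ) (hp : Prime p) (hodd : Odd p)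
    (hn : 2 ≤ n) (hplarge : 2 * (n + 3) ^ 2 * n ^ 4 < p)
    (hy : ¬ p ∣ y) (hy1 : ¬ p ∣ (y - 1)) (hy2 : ¬ p ∣ (y + 1))
    (hs₁ : 1 ≤ s₁) (hs₁n : s₁ ≤ n) (hs₂ : 1 ≤ s₂) (hs₂n : s₂ ≤ n)
    (hs₃ : 1 ≤ s₃) (hs₃n : s₃ ≤ n)
    (hr₁ : |r₁| < (n + 3) * s₁) (hr₂ : |r₂| < (n + 3) * s₂)
    (hr₃ : |r₃| < (n + 3) * s₃)
    (hr₁0 : r₁ ≠ 0) (hr₂0 : r₂ ≠ 0) (hr₃0 : r₃ ≠ 0)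
    (hcong₁ : p ∣ (y * s₂ * r₁ - r₂ * s₁))
    (hcong₂ : p ∣ (y * s₁ * r₃ - r₁ * s₃)) :
    ((r₁ : ℚ) / s₁) ^ 2 = ((r₂ : ℚ) / s₂) * ((r₃ : ℚ) / s₃) := by
  have hn0 : (0:ℤ) < n := by linarith
  have hb₁ : |r₁| ≤ (n + 3) * n := le_trans hr₁.le (by nlinarith)
  have hb₂ : |r₂| ≤ (n + 3) * n := le_trans hr₂.le (by nlinarith)
  have hb₃ : |r₃| ≤ (n + 3) * n := le_trans hr₃.le (by nlinarith)
  have hs₁abs : |s₁| ≤ n := by rw [abs_of_pos (by linarith)]; exact hs₁n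
  have hs₂abs : |s₂| ≤ n := by rw [abs_of_pos (by linarith)]; exact hs₂n
  have hs₃abs : |s₃| ≤ n := by rw [abs_of_pos (by linarith)]; exact hs₃n
  have hdvd : p ∣ (s₁ ^ 2 * r₂ * r₃ - r₁ ^ 2 * s₂ * s₃) := by
    obtain ⟨a, ha⟩ := hcong₁
    obtain ⟨b, hb⟩ := hcong₂
    exact ⟨b * (s₂ * r₁) - a * (s₁ * r₃), by linear_combination (s₂ * r₁) * hb - (s₁ * r₃) * ha⟩
  have hA : |s₁ ^ 2 * r₂ * r₃| ≤ (n + 3) ^ 2 * n ^ 4 := by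
    calc |s₁ ^ 2 * r₂ * r₃| = |s₁| ^ 2 * |r₂| * |r₃| := by
          rw [abs_mul, abs_mul, abs_pow]
      _ ≤ n ^ 2 * ((n + 3) * n) * ((n + 3) * n) := by
          gcongr <;> positivity
      _ = (n + 3) ^ 2 * n ^ 4 := by ring
  have hB : |r₁ ^ 2 * s₂ * s₃| ≤ (n + 3) ^ 2 * n ^ 4 := by
    calc |r₁ ^ 2 * s₂ * s₃| = |r₁| ^ 2 * |s₂| * |s₃| := by
          rw [abs_mul, abs_mul, abs_pow]
      _ ≤ ((n + 3) * n) ^ 2 * n * n := by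
          gcongr <;> positivity
      _ = (n + 3) ^ 2 * n ^ 4 := by ring
  have hzero : s₁ ^ 2 * r₂ * r₃ - r₁ ^ 2 * s₂ * s₃ = 0 := by
    refine Int.eq_zero_of_abs_lt_dvd hdvd ?_
    calc |s₁ ^ 2 * r₂ * r₃ - r₁ ^ 2 * s₂ * s₃|
        ≤ |s₁ ^ 2 * r₂ * r₃| + |r₁ ^ 2 * s₂ * s₃| := abs_sub _ _
      _ ≤ 2 * (n + 3) ^ 2 * n ^ 4 := by linarith
      _ < p := hplarge
  have h1 : (s₁ : ℚ) ≠ 0 := Int.cast_ne_zero.mpr (by linarith)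
  have h2 : (s₂ : ℚ) ≠ 0 := Int.cast_ne_zero.mpr (by linarith)
  have h3 : (s₃ : ℚ) ≠ 0 := Int.cast_ne_zero.mpr (by linarith)
  have hq : (s₁ : ℚ) ^ 2 * r₂ * r₃ - r₁ ^ 2 * s₂ * s₃ = 0 := by
    exact_mod_cast congrArg (Int.cast : ℤ → ℚ) hzero
  field_simp
  linear_combination -hq
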